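/- Let ψ₀, ψ₁ be unit vectors in ℂ^d and let E₀, E₁, E₂ be positive semidefinite d×d complex matrices with E₀ + E₁ + E₂ = I (a three-outcome POVM). Suppose the POVM is unambiguous: ⟨ψ₀, E₁ ψ₀⟩ = 0 and ⟨ψ₁, E₀ ψ₁⟩ = 0. Then the inconclusive probabilities c₀ := ⟨ψ₀, E₂ ψ₀⟩ and c₁ := ⟨ψ₁, E₂ ψ₁⟩ satisfy c₀ · c₁ ≥ |⟨ψ₀, ψ₁⟩|². -/

import Mathlib

open Matrix
open scoped ComplexOrder

/-- **Tradeoff for unambiguous discrimination of two pure states.**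
If `{E₀, E₁, E₂}` is a POVM on `ℂ^d` which is unambiguous for the unit vectors
`ψ₀, ψ₁` (outcome `1` never occurs on `ψ₀`, outcome `0` never occurs on `ψ₁`),
then the inconclusive probabilities satisfy `c₀·c₁ ≥ |⟨ψ₀,ψ₁⟩|²`. -/
theorem unambiguous_discrimination_tradeoff
    {d : ℕ} (ψ₀ ψ₁ : Fin d → ℂ)
    (hψ₀ : star ψ₀ ⬝ᵥ ψ₀ = 1) (hψ₁ : star ψ₁ ⬝ᵥ ψ₁ = 1)
    (E₀ E₁ E₂ : Matrix (Fin d) (Fin d) ℂ)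
    (hE₀ : E₀.PosSemidef) (hE₁ : E₁.PosSemidef) (hE₂ : E₂.PosSemidef)
    (hsum : E₀ + E₁ + E₂ = 1)
    (hunamb₀ : star ψ₀ ⬝ᵥ (E₁ *ᵥ ψ₀) = 0)
    (hunamb₁ : star ψ₁ ⬝ᵥ (E₀ *ᵥ ψ₁) = 0) :
    (star ψ₀ ⬝ᵥ (E₂ *ᵥ ψ₀)).re * (star ψ₁ ⬝ᵥ (E₂ *ᵥ ψ₁)).re
      ≥ ‖star ψ₀ ⬝ᵥ ψ₁‖ ^ 2 := by
  -- outcome vectors vanish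
  have hz₁ : E₁ *ᵥ ψ₀ = 0 := (hE₁.dotProduct_mulVec_zero_iff ψ₀).mp hunamb₀
  have hz₀ : E₀ *ᵥ ψ₁ = 0 := (hE₀.dotProduct_mulVec_zero_iff ψ₁).mp hunamb₁
  -- ⟨ψ₀, ψ₁⟩ = ⟨ψ₀, E₂ ψ₁⟩
  have hcross : star ψ₀ ⬝ᵥ ψ₁ = star ψ₀ ⬝ᵥ (E₂ *ᵥ ψ₁) := by
    have h1 : star ψ₀ ⬝ᵥ (E₁ *ᵥ ψ₁) = 0 := by
      rw [dotProduct_mulVec, ← star_star (star ψ₀ ᵥ* E₁)]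
      have : star (star ψ₀ ᵥ* E₁) = E₁ *ᵥ ψ₀ := by
        rw [← hE₁.1, ← star_mulVec, star_star, hE₁.1]
      rw [this, hz₁]
      simp
    calc star ψ₀ ⬝ᵥ ψ₁ = star ψ₀ ⬝ᵥ ((E₀ + E₁ + E₂) *ᵥ ψ₁) := by rw [hsum]; simp
      _ = star ψ₀ ⬝ᵥ (E₀ *ᵥ ψ₁) + star ψ₀ ⬝ᵥ (E₁ *ᵥ ψ₁) + star ψ₀ ⬝ᵥ (E₂ *ᵥ ψ₁) := by
          simp [add_mulVec, dotProduct_add]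
      _ = star ψ₀ ⬝ᵥ (E₂ *ᵥ ψ₁) := by rw [hz₀, h1]; simp
  -- factor E₂ = Bᴴ B and use Cauchy–Schwarz
  open scoped MatrixOrder Matrix.Norms.L2Operator in
  obtain ⟨B, hB⟩ := CStarAlgebra.nonneg_iff_eq_star_mul_self.mp hE₂.nonneg
  rw [star_eq_conjTranspose] at hB
  subst hB
  set u : EuclideanSpace ℂ (Fin d) := WithLp.toLp 2 (B *ᵥ ψ₀) with hu
  set v : EuclideanSpace ℂ (Fin d) := WithLp.toLp 2 (B *ᵥ ψ₁) with hv
  have key : ∀ x y : Fin d → ℂ, star x ⬝ᵥ ((Bᴴ * B) *ᵥ y) = star (B *ᵥ x) ⬝ᵥ (B *ᵥ y) := by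
    intro x y
    rw [← mulVec_mulVec, dotProduct_mulVec, vecMul_conjTranspose, star_star]
  have hiuv : (inner ℂ u v : ℂ) = star ψ₀ ⬝ᵥ ψ₁ := by
    rw [EuclideanSpace.inner_eq_star_dotProduct, hcross, key, dotProduct_comm]
  have hiuu : (inner ℂ u u : ℂ) = star ψ₀ ⬝ᵥ ((Bᴴ * B) *ᵥ ψ₀) := by
    rw [EuclideanSpace.inner_eq_star_dotProduct, key, dotProduct_comm]
  have hivv : (inner ℂ v v : ℂ) = star ψ₁ ⬝ᵥ ((Bᴴ * B) *ᵥ ψ₁) := by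
    rw [EuclideanSpace.inner_eq_star_dotProduct, key, dotProduct_comm]
  have hCS := inner_mul_inner_self_le (𝕜 := ℂ) u v
  have hsymm : ‖(inner ℂ v u : ℂ)‖ = ‖(inner ℂ u v : ℂ)‖ := by
    rw [← inner_conj_symm u v, RCLike.norm_conj]
  rw [hsymm, ← sq] at hCS
  calc ‖star ψ₀ ⬝ᵥ ψ₁‖ ^ 2 = ‖(inner ℂ u v : ℂ)‖ ^ 2 := by
        rw [hiuv]
    _ ≤ RCLike.re (inner ℂ u u : ℂ) * RCLike.re (inner ℂ v v : ℂ) := hCS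
    _ = (star ψ₀ ⬝ᵥ ((Bᴴ * B) *ᵥ ψ₀)).re * (star ψ₁ ⬝ᵥ ((Bᴴ * B) *ᵥ ψ₁)).re := by
        rw [hiuu, hivv]; rfl
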